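/- The derivative at s = 0 of the Dirichlet L-function of the nontrivial character modulo 4 equals L'(χ₄, 0) = log(Γ(1/4)/(2·Γ(3/4))). -/

import Mathlib

open Complex Filter Topology Set

lemma hasDerivAt_ofReal_cpow_const'' {t : ℝ} (ht : 0 < t) (c : ℂ) :
    HasDerivAt (fun u : ℝ => (u : ℂ) ^ c) (c * (t : ℂ) ^ (c - 1)) t := by
  have h : HasDerivAt (fun z : ℂ => z ^ c) (c * (t : ℂ) ^ (c - 1)) (t : ℂ) := by
    simpa using (hasDerivAt_id (t : ℂ)).cpow_const (by exact Or.inl (by exact_mod_cast ht))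
  simpa using h.comp_ofReal

lemma norm_cpow_of_pos {t : ℝ} (ht : 0 < t) (c : ℂ) : ‖(t : ℂ) ^ c‖ = t ^ c.re := by
  rw [Complex.norm_cpow_eq_rpow_re_of_pos ht]

lemma cpow_mvt {c : ℂ} (hc : c.re ≤ 1) {a b y z : ℝ} (ha : 1 ≤ a)
    (hy : y ∈ Icc a b) (hz : z ∈ Icc a b) :
    ‖(z : ℂ) ^ c - (y : ℂ) ^ c‖ ≤ ‖c‖ * a ^ (c.re - 1) * ‖z - y‖ := by
  have ha0 : (0:ℝ) < a := lt_of_lt_of_le one_pos ha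
  have key : ∀ x ∈ Icc a b, HasDerivWithinAt (fun u : ℝ => (u : ℂ) ^ c)
      (c * (x : ℂ) ^ (c - 1)) (Icc a b) x := fun x hx =>
    (hasDerivAt_ofReal_cpow_const'' (lt_of_lt_of_le ha0 hx.1) c).hasDerivWithinAt
  have bound : ∀ x ∈ Icc a b, ‖c * (x : ℂ) ^ (c - 1)‖ ≤ ‖c‖ * a ^ (c.re - 1) := by
    intro x hx
    have hx0 : (0:ℝ) < x := lt_of_lt_of_le ha0 hx.1
    rw [norm_mul, norm_cpow_of_pos hx0]
    have : x ^ (c - 1).re ≤ a ^ (c.re - 1) := by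
      rw [Complex.sub_re, Complex.one_re]
      exact Real.rpow_le_rpow_of_nonpos ha0 hx.1 (by linarith)
    exact mul_le_mul_of_nonneg_left (by simpa using this) (norm_nonneg c)
  have := Convex.norm_image_sub_le_of_norm_hasDerivWithin_le key bound (convex_Icc a b) hy hz
  simpa using this

lemma hasDerivAt_shift_cpow {s : ℂ} {u : ℝ} (hu : 0 < u + 2) :
    HasDerivAt (fun v : ℝ => ((v + 2 : ℝ) : ℂ) ^ (-s)) ((-s) * ((u + 2 : ℝ) : ℂ) ^ (-s - 1)) u := by
  have hinner : HasDerivAt (fun v : ℝ => v + 2) 1 u := by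
    simpa using (hasDerivAt_id u).add_const 2
  have h := HasDerivAt.scomp u (hasDerivAt_ofReal_cpow_const'' hu (-s)) hinner
  simpa [Function.comp_def, neg_mul] using h

lemma second_diff_bound {s : ℂ} (hs : -2 ≤ s.re) {x : ℝ} (hx : 1 ≤ x) :
    ‖(x : ℂ) ^ (-s) - 2 * ((x + 2 : ℝ) : ℂ) ^ (-s) + ((x + 4 : ℝ) : ℂ) ^ (-s)‖
      ≤ ‖s‖ * ‖s + 1‖ * x ^ (-s.re - 2) * 4 := by
  have hx0 : (0:ℝ) < x := lt_of_lt_of_le one_pos hx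
  set g : ℝ → ℂ := fun u => ((u + 2 : ℝ) : ℂ) ^ (-s) - (u : ℂ) ^ (-s) with hg
  have hgderiv : ∀ u ∈ Icc x (x + 2), HasDerivWithinAt g
      ((-s) * ((u + 2 : ℝ) : ℂ) ^ (-s - 1) - (-s) * (u : ℂ) ^ (-s - 1))
      (Icc x (x + 2)) u := by
    intro u hu
    have h1 := hasDerivAt_shift_cpow (s := s) (u := u) (by linarith [hu.1])
    have h2 := hasDerivAt_ofReal_cpow_const'' (lt_of_lt_of_le hx0 hu.1) (-s)
    exact (h1.sub h2).hasDerivWithinAt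
  have hbound : ∀ u ∈ Icc x (x + 2),
      ‖(-s) * ((u + 2 : ℝ) : ℂ) ^ (-s - 1) - (-s) * (u : ℂ) ^ (-s - 1)‖
        ≤ ‖s‖ * (‖s + 1‖ * x ^ (-s.re - 2) * 2) := by
    intro u hu
    rw [← mul_sub, norm_mul, norm_neg]
    refine mul_le_mul_of_nonneg_left ?_ (norm_nonneg s)
    have hc : (-s - 1).re ≤ 1 := by
      simp only [Complex.sub_re, Complex.neg_re, Complex.one_re]; linarith
    have hmvt := cpow_mvt hc hx
      (⟨hu.1, by linarith [hu.2]⟩ : u ∈ Icc x (x + 4))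
      (⟨by linarith [hu.1], by linarith [hu.2]⟩ : u + 2 ∈ Icc x (x + 4))
    have hn : ‖(u + 2) - u‖ = (2:ℝ) := by rw [show (u + 2) - u = (2:ℝ) by ring]; simp
    calc ‖((u + 2 : ℝ) : ℂ) ^ (-s - 1) - (u : ℂ) ^ (-s - 1)‖
        ≤ ‖-s - 1‖ * x ^ ((-s - 1).re - 1) * ‖(u + 2) - u‖ := hmvt
      _ = ‖s + 1‖ * x ^ (-s.re - 2) * 2 := by
          rw [hn]
          congr 2
          · rw [← norm_neg]; ring_nf
          · congr 1; simp only [Complex.sub_re, Complex.neg_re, Complex.one_re]; ring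
  have key := Convex.norm_image_sub_le_of_norm_hasDerivWithin_le hgderiv hbound
    (convex_Icc x (x + 2)) (⟨le_refl x, by linarith⟩ : x ∈ Icc x (x + 2))
    (⟨by linarith, le_refl (x + 2)⟩ : x + 2 ∈ Icc x (x + 2))
  have hnorm2 : ‖(x + 2) - x‖ = (2:ℝ) := by rw [show (x + 2) - x = (2:ℝ) by ring]; simp
  rw [hnorm2] at key
  have hgval : g (x + 2) - g x
      = (x : ℂ) ^ (-s) - 2 * ((x + 2 : ℝ) : ℂ) ^ (-s) + ((x + 4 : ℝ) : ℂ) ^ (-s) := by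
    simp only [hg]
    rw [show (x + 2 + 2 : ℝ) = x + 4 by ring]
    ring
  rw [hgval] at key
  calc ‖(x : ℂ) ^ (-s) - 2 * ((x + 2 : ℝ) : ℂ) ^ (-s) + ((x + 4 : ℝ) : ℂ) ^ (-s)‖
      ≤ ‖s‖ * (‖s + 1‖ * x ^ (-s.re - 2) * 2) * 2 := key
    _ = ‖s‖ * ‖s + 1‖ * x ^ (-s.re - 2) * 4 := by ring

noncomputable def Haux (k : ℕ) (s : ℂ) : ℂ :=
  ((4 * k + 1 : ℝ) : ℂ) ^ (-s) - 2 * ((4 * k + 3 : ℝ) : ℂ) ^ (-s) + ((4 * k + 5 : ℝ) : ℂ) ^ (-s)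

lemma Haux_differentiable (k : ℕ) : Differentiable ℂ (Haux k) := by
  have hd : ∀ c : ℝ, 0 < c → Differentiable ℂ (fun s : ℂ => (c : ℂ) ^ (-s)) := by
    intro c hc
    intro s
    exact ((hasDerivAt_neg s).const_cpow (Or.inl (by exact_mod_cast hc.ne'))).differentiableAt
  have h1 := hd (4 * k + 1 : ℝ) (by positivity)
  have h2 := hd (4 * k + 3 : ℝ) (by positivity)
  have h3 := hd (4 * k + 5 : ℝ) (by positivity)
  exact (h1.sub ((differentiable_const 2).mul h2)).add h3

lemma Haux_norm_le {k : ℕ} {s : ℂ} (hs : -(1/2 : ℝ) < s.re) :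
    ‖Haux k s‖ ≤ ‖s‖ * ‖s + 1‖ * ((k + 1 : ℝ)) ^ (-(3/2) : ℝ) * 4 := by
  have hx : (1:ℝ) ≤ (4 * k + 1 : ℝ) := by have := Nat.cast_nonneg (α := ℝ) k; linarith
  have h := second_diff_bound (s := s) (by linarith) hx
  have e2 : ((4 * k + 1 : ℝ) + 2) = (4 * k + 3 : ℝ) := by ring
  have e4 : ((4 * k + 1 : ℝ) + 4) = (4 * k + 5 : ℝ) := by ring
  rw [e2, e4] at h
  refine le_trans h ?_
  have hk1 : (0:ℝ) < (k + 1 : ℝ) := by positivity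
  have step1 : (4 * k + 1 : ℝ) ^ (-s.re - 2) ≤ (4 * k + 1 : ℝ) ^ (-(3/2) : ℝ) :=
    Real.rpow_le_rpow_of_exponent_le hx (by linarith)
  have step2 : (4 * k + 1 : ℝ) ^ (-(3/2) : ℝ) ≤ (k + 1 : ℝ) ^ (-(3/2) : ℝ) :=
    Real.rpow_le_rpow_of_nonpos hk1 (by linarith) (by norm_num)
  have := le_trans step1 step2
  have hnn : (0:ℝ) ≤ ‖s‖ * ‖s + 1‖ := by positivity
  nlinarith [norm_nonneg s, norm_nonneg (s+1), Real.rpow_nonneg (le_of_lt hk1) (-(3/2):ℝ)]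

lemma summable_pow_shift : Summable (fun k : ℕ => ((k + 1 : ℝ)) ^ (-(3/2) : ℝ)) := by
  have h : Summable (fun k : ℕ => 1 / (k : ℝ) ^ ((3/2) : ℝ)) :=
    Real.summable_one_div_nat_rpow.mpr (by norm_num)
  have h' := (summable_nat_add_iff 1).mpr h
  refine h'.congr fun k => ?_
  rw [one_div, ← Real.rpow_neg (by positivity)]
  norm_num

noncomputable def Faux (s : ℂ) : ℂ := (1 + ∑' k, Haux k s) / 2

lemma norm_bound_on_nbhd {s₀ : ℂ} {s : ℂ} (h : s ∈ Metric.ball s₀ 1 ∩ {z : ℂ | -(1/2:ℝ) < z.re}) (k : ℕ) :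
    ‖Haux k s‖ ≤ (‖s₀‖ + 1) * (‖s₀‖ + 2) * ((k + 1 : ℝ)) ^ (-(3/2) : ℝ) * 4 := by
  obtain ⟨hball, hre⟩ := h
  have hs : ‖s‖ ≤ ‖s₀‖ + 1 := by
    have := mem_ball_iff_norm.mp hball
    calc ‖s‖ = ‖s₀ + (s - s₀)‖ := by ring_nf
    _ ≤ ‖s₀‖ + ‖s - s₀‖ := norm_add_le _ _
    _ ≤ ‖s₀‖ + 1 := by linarith
  have hs1 : ‖s + 1‖ ≤ ‖s₀‖ + 2 := by
    calc ‖s + 1‖ ≤ ‖s‖ + 1 := by simpa using norm_add_le s 1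
    _ ≤ ‖s₀‖ + 2 := by linarith
  refine le_trans (Haux_norm_le hre) ?_
  have hp : (0:ℝ) ≤ ((k + 1 : ℝ)) ^ (-(3/2) : ℝ) := Real.rpow_nonneg (by positivity) _
  have hm : ‖s‖ * ‖s + 1‖ ≤ (‖s₀‖ + 1) * (‖s₀‖ + 2) :=
    mul_le_mul hs hs1 (norm_nonneg _) (by positivity)
  nlinarith [norm_nonneg s, norm_nonneg (s+1)]

lemma Faux_tsum_differentiableOn :
    DifferentiableOn ℂ (fun s => ∑' k, Haux k s) {z : ℂ | -(1/2:ℝ) < z.re} := by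
  intro s₀ hs₀
  have hopen : IsOpen (Metric.ball s₀ 1 ∩ {z : ℂ | -(1/2:ℝ) < z.re}) :=
    Metric.isOpen_ball.inter (isOpen_lt continuous_const Complex.continuous_re)
  have hdiff := differentiableOn_tsum_of_summable_norm
    (u := fun k : ℕ => (‖s₀‖ + 1) * (‖s₀‖ + 2) * ((k + 1 : ℝ)) ^ (-(3/2) : ℝ) * 4)
    (((summable_pow_shift.mul_left _).mul_right 4))
    (fun k => (Haux_differentiable k).differentiableOn) hopen
    (fun k w hw => norm_bound_on_nbhd hw k)
  have hmem : s₀ ∈ Metric.ball s₀ 1 ∩ {z : ℂ | -(1/2:ℝ) < z.re} :=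
    ⟨Metric.mem_ball_self one_pos, hs₀⟩
  exact ((hdiff s₀ hmem).differentiableAt (hopen.mem_nhds hmem)).differentiableWithinAt

lemma hasSum_deriv_Haux_zero :
    HasSum (fun k => deriv (Haux k) 0) (deriv (fun s => ∑' k, Haux k s) 0) := by
  have hopen : IsOpen (Metric.ball (0:ℂ) 1 ∩ {z : ℂ | -(1/2:ℝ) < z.re}) :=
    Metric.isOpen_ball.inter (isOpen_lt continuous_const Complex.continuous_re)
  have hmem : (0:ℂ) ∈ Metric.ball (0:ℂ) 1 ∩ {z : ℂ | -(1/2:ℝ) < z.re} :=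
    ⟨Metric.mem_ball_self one_pos, by norm_num⟩
  exact hasSum_deriv_of_summable_norm
    (u := fun k : ℕ => (‖(0:ℂ)‖ + 1) * (‖(0:ℂ)‖ + 2) * ((k + 1 : ℝ)) ^ (-(3/2) : ℝ) * 4)
    ((summable_pow_shift.mul_left _).mul_right 4)
    (fun k => (Haux_differentiable k).differentiableOn) hopen
    (fun k w hw => norm_bound_on_nbhd hw k) hmem

lemma deriv_cpow_neg_zero {c : ℝ} (hc : 0 < c) :
    deriv (fun s : ℂ => (c : ℂ) ^ (-s)) 0 = -(Real.log c : ℂ) := by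
  have h : HasDerivAt (fun s : ℂ => (c : ℂ) ^ (-s))
      ((c : ℂ) ^ (-(0:ℂ)) * Complex.log c * (-1)) 0 :=
    (hasDerivAt_neg (0:ℂ)).const_cpow (Or.inl (by exact_mod_cast hc.ne'))
  have := h.deriv
  rw [this, neg_zero, Complex.cpow_zero, one_mul, Complex.ofReal_log hc.le]
  ring

lemma deriv_Haux_zero (k : ℕ) :
    deriv (Haux k) 0 = ((-Real.log (4 * k + 1) + 2 * Real.log (4 * k + 3)
      - Real.log (4 * k + 5) : ℝ) : ℂ) := by
  have h1 : (0:ℝ) < 4 * k + 1 := by positivity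
  have h3 : (0:ℝ) < 4 * k + 3 := by positivity
  have h5 : (0:ℝ) < 4 * k + 5 := by positivity
  have d1 := ((hasDerivAt_neg (0:ℂ)).const_cpow (c := ((4 * k + 1 : ℝ) : ℂ))
    (Or.inl (by exact_mod_cast h1.ne')))
  have d3 := ((hasDerivAt_neg (0:ℂ)).const_cpow (c := ((4 * k + 3 : ℝ) : ℂ))
    (Or.inl (by exact_mod_cast h3.ne')))
  have d5 := ((hasDerivAt_neg (0:ℂ)).const_cpow (c := ((4 * k + 5 : ℝ) : ℂ))
    (Or.inl (by exact_mod_cast h5.ne')))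
  have hH : HasDerivAt (Haux k)
      (((4 * k + 1 : ℝ) : ℂ) ^ (-(0:ℂ)) * Complex.log ((4 * k + 1 : ℝ) : ℂ) * (-1)
        - 2 * (((4 * k + 3 : ℝ) : ℂ) ^ (-(0:ℂ)) * Complex.log ((4 * k + 3 : ℝ) : ℂ) * (-1))
        + ((4 * k + 5 : ℝ) : ℂ) ^ (-(0:ℂ)) * Complex.log ((4 * k + 5 : ℝ) : ℂ) * (-1)) 0 :=
    (d1.sub (d3.const_mul 2)).add d5
  rw [hH.deriv]
  simp only [neg_zero, Complex.cpow_zero, one_mul]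
  rw [← Complex.ofReal_log h1.le, ← Complex.ofReal_log h3.le, ← Complex.ofReal_log h5.le]
  push_cast
  ring

lemma summable_rpow_shift {σ : ℝ} (hσ : 1 < σ) :
    Summable (fun k : ℕ => ((k + 1 : ℝ)) ^ (-σ)) := by
  have h : Summable (fun k : ℕ => 1 / (k : ℝ) ^ σ) :=
    Real.summable_one_div_nat_rpow.mpr hσ
  have h' := (summable_nat_add_iff 1).mpr h
  refine h'.congr fun k => ?_
  rw [one_div, ← Real.rpow_neg (by positivity)]
  norm_num

lemma summable_cpow_shift {b : ℝ} (hb : 1 ≤ b) {s : ℂ} (hs : 1 < s.re) :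
    Summable (fun k : ℕ => ((4 * k + b : ℝ) : ℂ) ^ (-s)) := by
  refine Summable.of_norm_bounded (summable_rpow_shift hs) fun k => ?_
  have hpos : (0:ℝ) < 4 * k + b := by have := Nat.cast_nonneg (α := ℝ) k; linarith
  rw [norm_cpow_of_pos hpos]
  simp only [Complex.neg_re]
  exact Real.rpow_le_rpow_of_nonpos (by positivity)
    (by have := Nat.cast_nonneg (α := ℝ) k; linarith) (by linarith)

lemma Faux_eq_of_re_gt_one {s : ℂ} (hs : 1 < s.re) :
    Faux s = (∑' k : ℕ, ((4 * k + 1 : ℝ) : ℂ) ^ (-s))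
      - ∑' k : ℕ, ((4 * k + 3 : ℝ) : ℂ) ^ (-s) := by
  have S1 := summable_cpow_shift (le_refl 1) hs
  have S3 := summable_cpow_shift (by norm_num : (1:ℝ) ≤ 3) hs
  have S5 := summable_cpow_shift (by norm_num : (1:ℝ) ≤ 5) hs
  set T1 := ∑' k : ℕ, ((4 * k + 1 : ℝ) : ℂ) ^ (-s)
  set T3 := ∑' k : ℕ, ((4 * k + 3 : ℝ) : ℂ) ^ (-s)
  have hshift : ∑' k : ℕ, ((4 * k + 5 : ℝ) : ℂ) ^ (-s) = T1 - 1 := by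
    have h0 := S1.tsum_eq_zero_add
    have he : ∀ k : ℕ, ((4 * (k + 1 : ℕ) + 1 : ℝ) : ℂ) ^ (-s) = ((4 * k + 5 : ℝ) : ℂ) ^ (-s) := by
      intro k; push_cast; ring_nf
    have hf0 : ((4 * (0:ℕ) + 1 : ℝ) : ℂ) ^ (-s) = 1 := by norm_num
    rw [hf0] at h0
    have : ∑' k : ℕ, ((4 * (k + 1 : ℕ) + 1 : ℝ) : ℂ) ^ (-s)
        = ∑' k : ℕ, ((4 * k + 5 : ℝ) : ℂ) ^ (-s) := tsum_congr he
    rw [this] at h0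
    rw [show T1 = ∑' (k : ℕ), ((4 * (k:ℝ) + 1 : ℝ) : ℂ) ^ (-s) from rfl, h0]; ring
  have hHsum : ∑' k, Haux k s = T1 - 2 * T3 + (T1 - 1) := by
    rw [← hshift]
    unfold Haux
    rw [Summable.tsum_add (S1.sub (S3.mul_left 2)) S5, Summable.tsum_sub S1 (S3.mul_left 2), tsum_mul_left]
  unfold Faux
  rw [hHsum]; ring

/-- The unique nontrivial Dirichlet character modulo 4, with values in `ℂ`. -/
noncomputable def chiFour : DirichletCharacter ℂ 4 :=
  ZMod.χ₄.ringHomComp (Int.castRingHom ℂ)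

lemma chiFour_apply_nat (n : ℕ) :
    chiFour (n : ZMod 4) = if n % 2 = 0 then 0 else if n % 4 = 1 then 1 else -1 := by
  rw [chiFour, MulChar.ringHomComp_apply, ZMod.χ₄_nat_eq_if_mod_four]
  split_ifs <;> simp

lemma term_chiFour_eq {s : ℂ} (n : ℕ) :
    LSeries.term (fun n : ℕ => chiFour (n : ZMod 4)) s n
      = (if n % 4 = 1 then (n : ℂ) ^ (-s) else 0)
        - (if n % 4 = 3 then (n : ℂ) ^ (-s) else 0) := by
  rw [LSeries.term_def, chiFour_apply_nat]
  have h4 : n % 4 = 0 ∨ n % 4 = 1 ∨ n % 4 = 2 ∨ n % 4 = 3 := by omega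
  rcases h4 with h | h | h | h
  · have h2 : n % 2 = 0 := by omega
    simp [h, h2]
  · have h2 : ¬ (n % 2 = 0) := by omega
    have hn : n ≠ 0 := by omega
    simp [h, h2, hn, Complex.cpow_neg, one_div]
  · have h2 : n % 2 = 0 := by omega
    simp [h, h2]
  · have h2 : ¬ (n % 2 = 0) := by omega
    have hn : n ≠ 0 := by omega
    simp [h, h2, hn, Complex.cpow_neg]
    rw [neg_div]
    simp [div_eq_mul_inv]

lemma LSeries_chiFour_eq {s : ℂ} (hs : 1 < s.re) :
    LSeries (fun n : ℕ => chiFour (n : ZMod 4)) s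
      = (∑' k : ℕ, ((4 * k + 1 : ℝ) : ℂ) ^ (-s))
        - ∑' k : ℕ, ((4 * k + 3 : ℝ) : ℂ) ^ (-s) := by
  have S1 := summable_cpow_shift (le_refl 1) hs
  have S3 := summable_cpow_shift (by norm_num : (1:ℝ) ≤ 3) hs
  -- HasSum for f₁
  have key : ∀ (b : ℕ), b = 1 ∨ b = 3 →
      HasSum (fun n : ℕ => if n % 4 = b then (n : ℂ) ^ (-s) else 0)
        (∑' k : ℕ, ((4 * k + (b:ℝ) : ℝ) : ℂ) ^ (-s)) := by
    intro b hb
    have hSb : Summable (fun k : ℕ => ((4 * k + (b:ℝ) : ℝ) : ℂ) ^ (-s)) := by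
      rcases hb with rfl | rfl
      · exact_mod_cast S1
      · exact_mod_cast S3
    have hinj : Function.Injective (fun k : ℕ => 4 * k + b) := by
      intro a a' h
      have h' : 4 * a + b = 4 * a' + b := h
      omega
    have hvanish : ∀ n : ℕ, n ∉ Set.range (fun k : ℕ => 4 * k + b) →
        (if n % 4 = b then (n : ℂ) ^ (-s) else 0) = 0 := by
      intro n hn
      rw [if_neg]
      intro hmod
      refine hn ⟨n / 4, ?_⟩
      show 4 * (n / 4) + b = n
      rcases hb with rfl | rfl <;> omega
    have hcomp : ∀ k : ℕ, ((fun n : ℕ => if n % 4 = b then (n : ℂ) ^ (-s) else 0)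
        ∘ (fun k : ℕ => 4 * k + b)) k = ((4 * k + (b:ℝ) : ℝ) : ℂ) ^ (-s) := by
      intro k
      simp only [Function.comp_apply]
      rw [if_pos (by rcases hb with rfl | rfl <;> omega)]
      norm_num
    have hfun : ((fun n : ℕ => if n % 4 = b then (n : ℂ) ^ (-s) else 0)
        ∘ (fun k : ℕ => 4 * k + b)) = (fun k : ℕ => ((4 * k + (b:ℝ) : ℝ) : ℂ) ^ (-s)) :=
      funext hcomp
    exact (Function.Injective.hasSum_iff hinj hvanish).mp (hfun ▸ hSb.hasSum)
  have h1 := key 1 (Or.inl rfl)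
  have h3 := key 3 (Or.inr rfl)
  simp only [Nat.cast_one, Nat.cast_ofNat] at h1 h3
  have hsum := h1.sub h3
  have hfun : (fun n : ℕ => LSeries.term (fun n : ℕ => chiFour (n : ZMod 4)) s n)
      = fun n : ℕ => (if n % 4 = 1 then (n : ℂ) ^ (-s) else 0)
        - (if n % 4 = 3 then (n : ℂ) ^ (-s) else 0) := funext term_chiFour_eq
  rw [LSeries, hfun]
  exact hsum.tsum_eq

lemma chiFour_ne_one : chiFour ≠ 1 := by
  intro h
  have h3 := congrArg (fun χ : DirichletCharacter ℂ 4 => χ ((3 : ℕ) : ZMod 4)) h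
  have hval : chiFour ((3 : ℕ) : ZMod 4) = -1 := by
    rw [chiFour_apply_nat]; norm_num
  have hone : (1 : DirichletCharacter ℂ 4) ((3 : ℕ) : ZMod 4) = 1 := by
    have hu : IsUnit ((3 : ℕ) : ZMod 4) := by decide
    exact MulChar.one_apply hu
  rw [hval, hone] at h3
  norm_num at h3

lemma Faux_differentiableOn :
    DifferentiableOn ℂ Faux {z : ℂ | -(1/2:ℝ) < z.re} := by
  have := Faux_tsum_differentiableOn
  exact ((differentiableOn_const 1).add this).div_const 2

lemma LFunction_eqOn_Faux :
    Set.EqOn chiFour.LFunction Faux {z : ℂ | -(1/2:ℝ) < z.re} := by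
  have hopen : IsOpen {z : ℂ | -(1/2:ℝ) < z.re} :=
    isOpen_lt continuous_const Complex.continuous_re
  have hpre : IsPreconnected {z : ℂ | -(1/2:ℝ) < z.re} :=
    (convex_halfSpace_re_gt _).isPreconnected
  have hf : AnalyticOnNhd ℂ chiFour.LFunction {z : ℂ | -(1/2:ℝ) < z.re} :=
    ((DirichletCharacter.differentiable_LFunction chiFour_ne_one).differentiableOn).analyticOnNhd
      hopen
  have hg : AnalyticOnNhd ℂ Faux {z : ℂ | -(1/2:ℝ) < z.re} :=
    Faux_differentiableOn.analyticOnNhd hopen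
  have hmem2 : (2:ℂ) ∈ {z : ℂ | -(1/2:ℝ) < z.re} := by norm_num
  have hopen1 : IsOpen {z : ℂ | 1 < z.re} := isOpen_lt continuous_const Complex.continuous_re
  have hev : chiFour.LFunction =ᶠ[nhds (2:ℂ)] Faux := by
    refine Filter.eventuallyEq_of_mem (hopen1.mem_nhds (by norm_num)) fun s hs => ?_
    have hs' : 1 < s.re := hs
    rw [DirichletCharacter.LFunction_eq_LSeries _ hs', LSeries_chiFour_eq hs',
      Faux_eq_of_re_gt_one hs']
  exact hf.eqOn_of_preconnected_of_eventuallyEq hg hpre hmem2 hev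

lemma deriv_LFunction_eq_deriv_Faux :
    deriv chiFour.LFunction 0 = deriv Faux 0 := by
  have hopen : IsOpen {z : ℂ | -(1/2:ℝ) < z.re} :=
    isOpen_lt continuous_const Complex.continuous_re
  have hmem : (0:ℂ) ∈ {z : ℂ | -(1/2:ℝ) < z.re} := by norm_num
  exact Filter.EventuallyEq.deriv_eq
    (Filter.eventuallyEq_of_mem (hopen.mem_nhds hmem) LFunction_eqOn_Faux)

lemma deriv_Faux_zero :
    deriv Faux 0 = deriv (fun s => ∑' k, Haux k s) 0 / 2 := by
  have hopen : IsOpen {z : ℂ | -(1/2:ℝ) < z.re} :=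
    isOpen_lt continuous_const Complex.continuous_re
  have hmem : (0:ℂ) ∈ {z : ℂ | -(1/2:ℝ) < z.re} := by norm_num
  have hdiff : DifferentiableAt ℂ (fun s => ∑' k, Haux k s) 0 :=
    (Faux_tsum_differentiableOn 0 hmem).differentiableAt (hopen.mem_nhds hmem)
  unfold Faux
  rw [deriv_div_const, deriv_const_add']
open Filter Topology

noncomputable def ell (k : ℕ) : ℝ := Real.log (4 * k + 3) - Real.log (4 * k + 1)

lemma log_GammaSeq {s : ℝ} (hs : 0 < s) {n : ℕ} (hn : 1 ≤ n) :
    Real.log (Real.GammaSeq s n)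
      = s * Real.log n + Real.log (n.factorial)
        - ∑ j ∈ Finset.range (n + 1), Real.log (s + j) := by
  have hn0 : (0:ℝ) < n := by exact_mod_cast hn
  have hfac : (0:ℝ) < (n.factorial : ℝ) := by exact_mod_cast n.factorial_pos
  have hprod : ∀ j ∈ Finset.range (n + 1), (s + (j:ℝ)) ≠ 0 := by
    intro j _
    have : (0:ℝ) ≤ (j:ℝ) := Nat.cast_nonneg j
    positivity
  have hprodpos : (0:ℝ) < ∏ j ∈ Finset.range (n + 1), (s + (j:ℝ)) := by
    apply Finset.prod_pos
    intro j _
    have : (0:ℝ) ≤ (j:ℝ) := Nat.cast_nonneg j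
    positivity
  rw [Real.GammaSeq, Real.log_div (by positivity) hprodpos.ne',
    Real.log_mul (by positivity) hfac.ne', Real.log_rpow hn0, Real.log_prod hprod]

lemma log_GammaSeq_ratio {n : ℕ} (hn : 1 ≤ n) :
    Real.log (Real.GammaSeq (1/4 : ℝ) n / Real.GammaSeq (3/4 : ℝ) n)
      = ∑ j ∈ Finset.range (n + 1), ell j - (1/2) * Real.log n := by
  have h1 : (0:ℝ) < Real.GammaSeq (1/4 : ℝ) n := by
    rw [Real.GammaSeq]
    have : (0:ℝ) < ∏ j ∈ Finset.range (n + 1), ((1/4 : ℝ) + (j:ℝ)) :=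
      Finset.prod_pos fun j _ => by have : (0:ℝ) ≤ (j:ℝ) := Nat.cast_nonneg j; positivity
    have hn0 : (0:ℝ) < n := by exact_mod_cast hn
    have hfac : (0:ℝ) < (n.factorial : ℝ) := by exact_mod_cast n.factorial_pos
    positivity
  have h3 : (0:ℝ) < Real.GammaSeq (3/4 : ℝ) n := by
    rw [Real.GammaSeq]
    have : (0:ℝ) < ∏ j ∈ Finset.range (n + 1), ((3/4 : ℝ) + (j:ℝ)) :=
      Finset.prod_pos fun j _ => by have : (0:ℝ) ≤ (j:ℝ) := Nat.cast_nonneg j; positivity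
    have hn0 : (0:ℝ) < n := by exact_mod_cast hn
    have hfac : (0:ℝ) < (n.factorial : ℝ) := by exact_mod_cast n.factorial_pos
    positivity
  rw [Real.log_div h1.ne' h3.ne', log_GammaSeq (by norm_num) hn, log_GammaSeq (by norm_num) hn]
  have hsum : ∑ j ∈ Finset.range (n + 1), Real.log ((3/4 : ℝ) + j)
      - ∑ j ∈ Finset.range (n + 1), Real.log ((1/4 : ℝ) + j)
      = ∑ j ∈ Finset.range (n + 1), ell j := by
    rw [← Finset.sum_sub_distrib]
    refine Finset.sum_congr rfl fun j _ => ?_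
    have hj : (0:ℝ) ≤ (j:ℝ) := Nat.cast_nonneg j
    have e3 : (3/4 : ℝ) + j = (4 * j + 3) / 4 := by ring
    have e1 : (1/4 : ℝ) + j = (4 * j + 1) / 4 := by ring
    rw [e3, e1, Real.log_div (by positivity) (by norm_num),
      Real.log_div (by positivity) (by norm_num), ell]
    ring
  linarith [hsum]

lemma gauss_limit :
    Tendsto (fun N : ℕ => (∑ k ∈ Finset.range N, ell k) - (1/2) * Real.log (4 * N + 1))
      atTop (𝓝 (Real.log (Real.Gamma (1/4) / (2 * Real.Gamma (3/4))))) := by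
  have hG1 : (0:ℝ) < Real.Gamma (1/4) := Real.Gamma_pos_of_pos (by norm_num)
  have hG3 : (0:ℝ) < Real.Gamma (3/4) := Real.Gamma_pos_of_pos (by norm_num)
  -- limit of log of GammaSeq ratio
  have hratio : Tendsto (fun n : ℕ => Real.GammaSeq (1/4 : ℝ) n / Real.GammaSeq (3/4 : ℝ) n)
      atTop (𝓝 (Real.Gamma (1/4) / Real.Gamma (3/4))) :=
    (Real.GammaSeq_tendsto_Gamma _).div (Real.GammaSeq_tendsto_Gamma _) hG3.ne'
  have hlog : Tendsto (fun n : ℕ => Real.log (Real.GammaSeq (1/4 : ℝ) n / Real.GammaSeq (3/4 : ℝ) n))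
      atTop (𝓝 (Real.log (Real.Gamma (1/4) / Real.Gamma (3/4)))) :=
    hratio.log (by positivity)
  -- t n := ∑_{j ≤ n} ell j - (1/2) log n  has the same limit
  have ht : Tendsto (fun n : ℕ => ∑ j ∈ Finset.range (n + 1), ell j - (1/2) * Real.log n)
      atTop (𝓝 (Real.log (Real.Gamma (1/4) / Real.Gamma (3/4)))) := by
    refine hlog.congr' ?_
    filter_upwards [eventually_ge_atTop 1] with n hn
    exact log_GammaSeq_ratio hn
  -- (4n+5)/n → 4, so (1/2) * log((4n+5)/n) → log 2
  have hq : Tendsto (fun n : ℕ => ((4 * n + 5 : ℝ)) / n) atTop (𝓝 4) := by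
    have h5 : Tendsto (fun n : ℕ => 5 / (n:ℝ)) atTop (𝓝 0) :=
      tendsto_const_nhds.div_atTop tendsto_natCast_atTop_atTop
    have : Tendsto (fun n : ℕ => 4 + 5 / (n:ℝ)) atTop (𝓝 (4 + 0)) :=
      tendsto_const_nhds.add h5
    rw [add_zero] at this
    refine this.congr' ?_
    filter_upwards [eventually_ge_atTop 1] with n hn
    have hn0 : (0:ℝ) < n := by exact_mod_cast hn
    field_simp
  have hqlog : Tendsto (fun n : ℕ => Real.log ((4 * n + 5 : ℝ) / n)) atTop (𝓝 (Real.log 4)) :=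
    hq.log (by norm_num)
  -- combine: u (n+1) = t n - (1/2) log ((4n+5)/n)
  have hcomb : Tendsto (fun n : ℕ => (∑ k ∈ Finset.range (n + 1), ell k)
      - (1/2) * Real.log (4 * (n + 1 : ℕ) + 1))
      atTop (𝓝 (Real.log (Real.Gamma (1/4) / Real.Gamma (3/4)) - (1/2) * Real.log 4)) := by
    have := ht.sub (hqlog.const_mul (1/2))
    refine this.congr' ?_
    filter_upwards [eventually_ge_atTop 1] with n hn
    have hn0 : (0:ℝ) < n := by exact_mod_cast hn
    have h45 : (0:ℝ) < 4 * n + 5 := by positivity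
    rw [Real.log_div h45.ne' hn0.ne']
    push_cast
    ring
  have hval : Real.log (Real.Gamma (1/4) / Real.Gamma (3/4)) - (1/2) * Real.log 4
      = Real.log (Real.Gamma (1/4) / (2 * Real.Gamma (3/4))) := by
    rw [Real.log_div hG1.ne' hG3.ne', Real.log_div hG1.ne' (by positivity),
      Real.log_mul (by norm_num) hG3.ne',
      show (4:ℝ) = 2^2 by norm_num, Real.log_pow]
    push_cast
    ring
  rw [hval] at hcomb
  exact (tendsto_add_atTop_iff_nat 1).mp hcomb

lemma sum_d_eq (N : ℕ) :
    ∑ k ∈ Finset.range N, (-Real.log (4 * k + 1) + 2 * Real.log (4 * k + 3)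
        - Real.log (4 * k + 5))
      = 2 * ((∑ k ∈ Finset.range N, ell k) - (1/2) * Real.log (4 * N + 1)) := by
  have key : ∀ k : ℕ, (-Real.log (4 * k + 1) + 2 * Real.log (4 * k + 3) - Real.log (4 * k + 5))
      = 2 * ell k + (Real.log (4 * k + 1) - Real.log (4 * (k+1 : ℕ) + 1)) := by
    intro k
    rw [ell]
    push_cast
    ring_nf
  rw [Finset.sum_congr rfl fun k _ => key k, Finset.sum_add_distrib,
    Finset.sum_range_sub' (fun k : ℕ => Real.log (4 * k + 1)) N]
  simp only [Nat.cast_zero, mul_zero, zero_add, Real.log_one]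
  rw [← Finset.mul_sum]
  ring

lemma deriv_tsum_Haux_zero :
    deriv (fun s => ∑' k, Haux k s) 0
      = ((2 * Real.log (Real.Gamma (1/4) / (2 * Real.Gamma (3/4))) : ℝ) : ℂ) := by
  have h := hasSum_deriv_Haux_zero
  have hterm : (fun k : ℕ => deriv (Haux k) 0)
      = fun k : ℕ => ((-Real.log (4 * k + 1) + 2 * Real.log (4 * k + 3)
        - Real.log (4 * k + 5) : ℝ) : ℂ) := funext deriv_Haux_zero
  rw [hterm] at h
  have h1 := h.tendsto_sum_nat
  have h2 : Tendsto (fun N : ℕ => ∑ k ∈ Finset.range N,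
      ((-Real.log (4 * k + 1) + 2 * Real.log (4 * k + 3) - Real.log (4 * k + 5) : ℝ) : ℂ))
      atTop (𝓝 ((2 * Real.log (Real.Gamma (1/4) / (2 * Real.Gamma (3/4))) : ℝ) : ℂ)) := by
    have hr : Tendsto (fun N : ℕ => (2 * ((∑ k ∈ Finset.range N, ell k)
        - (1/2) * Real.log (4 * N + 1)) : ℝ))
        atTop (𝓝 (2 * Real.log (Real.Gamma (1/4) / (2 * Real.Gamma (3/4))))) :=
      gauss_limit.const_mul 2
    have := (Complex.continuous_ofReal.tendsto _).comp hr
    refine this.congr fun N => ?_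
    rw [Function.comp_apply, ← sum_d_eq N]
    push_cast
    rfl
  exact tendsto_nhds_unique h1 h2

/-- The derivative at `s = 0` of the Dirichlet L-function of the nontrivial
character modulo 4 equals `log (Γ(1/4) / (2 Γ(3/4)))`. -/
theorem deriv_LFunction_chiFour_zero :
    deriv chiFour.LFunction 0
      = Real.log (Real.Gamma (1 / 4) / (2 * Real.Gamma (3 / 4))) := by
  rw [deriv_LFunction_eq_deriv_Faux, deriv_Faux_zero, deriv_tsum_Haux_zero]
  push_cast
  ring
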